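/- Let L be a closed chain link with k = p + q ≥ 3 components arranged in a cycle, where each component is an unknotted circle and consecutive components form a Hopf link (so each component has linking number ±1 with exactly two other components, and linking number 0 with all others). Then every diagram of L has at least 4 crossings involving each component, and hence the crossing number of L is at least 2(p+q). -/
import Mathlib


/- A closed chain link with k = p + q ≥ 3 components, each unknotted, each having
linking number ±1 with exactly two others and 0 with the rest, has at least 4
crossings involving each component in every diagram, hence crossing number ≥ 2(p+q). -/

/-- An abstract theory of links, diagrams and linking numbers, bundling the standard
geometric facts used in the argument. -/
structure ChainLinkTheory where
  Link : Type
  Diagram : Type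
  Component : Type
  linkOf : Diagram → Link
  crossings : Diagram → ℕ
  componentsOf : Link → Finset Component
  Unknotted : Component → Prop
  lk : Component → Component → ℤ
  /-- number of crossings of a diagram involving a given component -/
  crossingsInvolving : Diagram → Component → ℕ
  /-- number of crossings between two distinct components -/
  crossingsBetween : Diagram → Component → Component → ℕ
  /-- a diagram needs at least 2·|lk(c,c')| crossings between components c and c' -/
  lk_le_crossingsBetween : ∀ d c c', c ∈ componentsOf (linkOf d) →
    c' ∈ componentsOf (linkOf d) → c ≠ c' →
    2 * (lk c c').natAbs ≤ crossingsBetween d c c'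
  /-- crossings between c and distinct components are among the crossings involving c -/
  sum_between_le : ∀ d c (s : Finset Component), c ∉ s → s ⊆ componentsOf (linkOf d) →
    ∑ c' ∈ s, crossingsBetween d c c' ≤ crossingsInvolving d c
  /-- each crossing involves at most two components -/
  sum_involving_le : ∀ d, ∑ c ∈ componentsOf (linkOf d), crossingsInvolving d c ≤
    2 * crossings d
  crossingNumber : Link → ℕ
  crossingNumber_spec : ∀ L, ∃ d, linkOf d = L ∧ crossings d = crossingNumber L

theorem chain_crossing_number (𝒯 : ChainLinkTheory) (L : 𝒯.Link) (p q : ℕ)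
    (hcard : (𝒯.componentsOf L).card = p + q) (hk : 3 ≤ p + q)
    (hunknot : ∀ c ∈ 𝒯.componentsOf L, 𝒯.Unknotted c)
    (hlk : ∀ c ∈ 𝒯.componentsOf L, ∃ s : Finset 𝒯.Component,
      s ⊆ 𝒯.componentsOf L ∧ s.card = 2 ∧ c ∉ s ∧
      (∀ c' ∈ s, (𝒯.lk c c').natAbs = 1) ∧
      (∀ c' ∈ 𝒯.componentsOf L, c' ∉ s → c' ≠ c → 𝒯.lk c c' = 0)) :
    (∀ d, 𝒯.linkOf d = L → ∀ c ∈ 𝒯.componentsOf L, 4 ≤ 𝒯.crossingsInvolving d c) ∧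
    2 * (p + q) ≤ 𝒯.crossingNumber L := by
  have key : ∀ d, 𝒯.linkOf d = L → ∀ c ∈ 𝒯.componentsOf L, 4 ≤ 𝒯.crossingsInvolving d c := by
    intro d hd c hc
    obtain ⟨s, hsub, hcard2, hns, h1, -⟩ := hlk c hc
    have h4 : 4 ≤ ∑ c' ∈ s, 𝒯.crossingsBetween d c c' := by
      calc 4 = ∑ _c' ∈ s, 2 := by rw [Finset.sum_const, hcard2, smul_eq_mul]
        _ ≤ _ := Finset.sum_le_sum (fun c' hc' => by
            have := 𝒯.lk_le_crossingsBetween d c c' (hd ▸ hc) (hd ▸ hsub hc')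
              (fun h => hns (h ▸ hc'))
            rw [h1 c' hc'] at this; omega)
    exact h4.trans (𝒯.sum_between_le d c s hns (hd ▸ hsub))
  refine ⟨key, ?_⟩
  obtain ⟨d, hd, hcr⟩ := 𝒯.crossingNumber_spec L
  have h1 : 4 * (p + q) ≤ ∑ c ∈ 𝒯.componentsOf (𝒯.linkOf d), 𝒯.crossingsInvolving d c := by
    rw [hd]
    calc 4 * (p + q) = ∑ _c ∈ 𝒯.componentsOf L, 4 := by rw [Finset.sum_const, hcard, smul_eq_mul]; ring
      _ ≤ _ := Finset.sum_le_sum (fun c hc => key d hd c hc)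
  have h2 := 𝒯.sum_involving_le d
  omega
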